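/- Let G be a group, (I₀, ≤, ∨, 0) a join-semilattice with 0, δ : G → I₀ a valuation, and K any group. Define δ ∗ 0 : G ∗ K → I₀ by (δ ∗ 0)(x) = δ(u₀) ∨ δ(u₁) ∨ ⋯ ∨ δ(u_n) when x has reduced expression u₀v₁u₁⋯v_nu_n with u_i ∈ G and v_j ∈ K. Then δ ∗ 0 is a valuation on G ∗ K, it extends δ, and for every b ∈ I₀ the level subgroup (G ∗ K)_{δ∗0}(b) equals the subgroup generated by G_δ(b) and K (which is their free product G_δ(b) ∗ K). -/

import Mathlib

/-- The level subgroup `G_δ(b) = {g | δ g ≤ b}` of a valuation `δ`. -/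
def levelSubgroup {G : Type*} [Group G] {I₀ : Type*} [SemilatticeSup I₀] [OrderBot I₀]
    (δ : G → I₀) (h1 : δ 1 = ⊥) (hinv : ∀ g : G, δ g⁻¹ = δ g)
    (hmul : ∀ g h : G, δ (g * h) ≤ δ g ⊔ δ h) (b : I₀) : Subgroup G where
  carrier := {g : G | δ g ≤ b}
  one_mem' := by simp [h1]
  mul_mem' := fun hx hy => le_trans (hmul _ _) (sup_le hx hy)
  inv_mem' := fun hx => by simpa [hinv] using hx

/-- The join of the values of the letters of a word, where letters from `G` are evaluated
by `δ` and letters from `K` get the value `⊥ = 0`. -/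
def wordVal {G K : Type*} {I₀ : Type*} [SemilatticeSup I₀] [OrderBot I₀]
    (δ : G → I₀) (l : List (G ⊕ K)) : I₀ :=
  (l.map (Sum.elim δ (fun _ => (⊥ : I₀)))).foldr (· ⊔ ·) ⊥

/-- The letters of the free product `G ∗ K`. -/
def letterProd {G K : Type*} [Group G] [Group K] : G ⊕ K → Monoid.Coprod G K :=
  Sum.elim (fun g => Monoid.Coprod.inl g) (fun k => Monoid.Coprod.inr k)

set_option linter.unusedSectionVars false

open Monoid CoprodI

universe u v

namespace Stmt11Aux

variable (G : Type u) (K : Type v)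

/-- The two-element family for the free product `G ∗ K`. -/
def BF : Bool → Type (max u v)
  | true => ULift.{v} G
  | false => ULift.{u} K

variable [Group G] [Group K]

instance : ∀ b, Group (BF G K b)
  | true => inferInstanceAs (Group (ULift G))
  | false => inferInstanceAs (Group (ULift K))

variable {I₀ : Type*} [SemilatticeSup I₀] [OrderBot I₀]

variable {G K} (δ : G → I₀)

/-- letter value -/
def lval : ∀ b, BF G K b → I₀
  | true => fun g => δ g.down
  | false => fun _ => ⊥

/-- value of a list of letters -/
def sval (l : List (Σ b, BF G K b)) : I₀ :=
  (l.map fun p => lval δ p.1 p.2).foldr (· ⊔ ·) ⊥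

@[simp] lemma sval_nil : sval δ ([] : List (Σ b, BF G K b)) = ⊥ := rfl

@[simp] lemma sval_cons (p : Σ b, BF G K b) (l : List (Σ b, BF G K b)) :
    sval δ (p :: l) = lval δ p.1 p.2 ⊔ sval δ l := rfl

lemma sval_append (l₁ l₂ : List (Σ b, BF G K b)) :
    sval δ (l₁ ++ l₂) = sval δ l₁ ⊔ sval δ l₂ := by
  induction l₁ with
  | nil => simp
  | cons p l ih => simp [ih, sup_assoc]

lemma sval_reverse (l : List (Σ b, BF G K b)) : sval δ l.reverse = sval δ l := by
  induction l with
  | nil => rfl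
  | cons p l ih => simp [sval_append, ih, sup_comm]

/-- value of a word -/
def wval (w : Word (BF G K)) : I₀ := sval δ w.toList

lemma lval_one (h1 : δ 1 = ⊥) (b : Bool) : lval δ b (1 : BF G K b) = (⊥ : I₀) := by
  cases b
  · rfl
  · exact h1

lemma lval_inv (hinv : ∀ g : G, δ g⁻¹ = δ g) (b : Bool) (m : BF G K b) : lval δ b m⁻¹ = lval δ b m := by
  cases b
  · rfl
  · exact hinv _

lemma lval_mul (hmul : ∀ g h : G, δ (g * h) ≤ δ g ⊔ δ h) (b : Bool) (m m' : BF G K b) :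
    lval δ b (m * m') ≤ lval δ b m ⊔ lval δ b m' := by
  cases b
  · simp [lval]
  · exact hmul _ _


noncomputable instance : ∀ b, DecidableEq (BF G K b) := fun _ => Classical.decEq _

/-- The valuation on the free product, defined via reduced words. -/
noncomputable def D (x : Monoid.CoprodI (BF G K)) : I₀ := wval δ (Word.equiv x)

lemma equiv_one : Word.equiv (1 : Monoid.CoprodI (BF G K)) = Word.empty := by
  exact one_smul (Monoid.CoprodI (BF G K)) Word.empty

lemma equiv_prod (w : Word (BF G K)) : Word.equiv w.prod = w :=
  Word.equiv.apply_symm_apply w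

lemma equiv_mul (x y : Monoid.CoprodI (BF G K)) :
    Word.equiv (x * y) = x • Word.equiv y :=
  mul_smul x y (Word.empty : Word (BF G K))

@[simp] lemma D_one : D δ (1 : Monoid.CoprodI (BF G K)) = ⊥ := by
  rw [D, equiv_one]; rfl

lemma wval_rcons (h1 : δ 1 = ⊥) {b : Bool} (p : Word.Pair (BF G K) b) :
    wval δ (Word.rcons p) = lval δ b p.head ⊔ wval δ p.tail := by
  rw [Word.rcons]
  split_ifs with h
  · rw [h, lval_one δ h1, bot_sup_eq]
  · rfl

lemma wval_smul_le (h1 : δ 1 = ⊥) (hmul : ∀ g h : G, δ (g * h) ≤ δ g ⊔ δ h)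
    {b : Bool} (m : BF G K b) (w : Word (BF G K)) :
    wval δ (Monoid.CoprodI.of m • w) ≤ lval δ b m ⊔ wval δ w := by
  rw [Word.of_smul_def, wval_rcons δ h1]
  have hw : Word.rcons (Word.equivPair b w) = w := (Word.equivPair b).symm_apply_apply w
  calc lval δ b (m * (Word.equivPair b w).head) ⊔ wval δ (Word.equivPair b w).tail
      ≤ (lval δ b m ⊔ lval δ b (Word.equivPair b w).head) ⊔ wval δ (Word.equivPair b w).tail :=
        sup_le_sup_right (lval_mul δ hmul _ _ _) _
    _ = lval δ b m ⊔ (lval δ b (Word.equivPair b w).head ⊔ wval δ (Word.equivPair b w).tail) :=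
        sup_assoc ..
    _ = lval δ b m ⊔ wval δ w := by rw [← wval_rcons δ h1, hw]

lemma D_mul_of_le (h1 : δ 1 = ⊥) (hmul : ∀ g h : G, δ (g * h) ≤ δ g ⊔ δ h)
    {b : Bool} (m : BF G K b) (x : Monoid.CoprodI (BF G K)) :
    D δ (Monoid.CoprodI.of m * x) ≤ lval δ b m ⊔ D δ x := by
  rw [D, equiv_mul]
  exact wval_smul_le δ h1 hmul m _

lemma D_prod_le (h1 : δ 1 = ⊥) (hmul : ∀ g h : G, δ (g * h) ≤ δ g ⊔ δ h)
    (l : List (Σ b, BF G K b)) :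
    D δ (l.map fun p => Monoid.CoprodI.of p.2).prod ≤ sval δ l := by
  induction l with
  | nil => simp
  | cons p l ih =>
      rw [List.map_cons, List.prod_cons, sval_cons]
      exact le_trans (D_mul_of_le δ h1 hmul _ _) (sup_le_sup_left ih _)

lemma prod_toList (w : Word (BF G K)) :
    (w.toList.map fun p => Monoid.CoprodI.of p.2).prod = w.prod := rfl

lemma D_mul_le (h1 : δ 1 = ⊥) (hmul : ∀ g h : G, δ (g * h) ≤ δ g ⊔ δ h)
    (x y : Monoid.CoprodI (BF G K)) : D δ (x * y) ≤ D δ x ⊔ D δ y := by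
  have hx : ((Word.equiv x).toList.map fun p => Monoid.CoprodI.of p.2).prod = x := by
    rw [prod_toList]; exact Word.equiv.symm_apply_apply x
  have hy : ((Word.equiv y).toList.map fun p => Monoid.CoprodI.of p.2).prod = y := by
    rw [prod_toList]; exact Word.equiv.symm_apply_apply y
  have : x * y = (((Word.equiv x).toList ++ (Word.equiv y).toList).map
      fun p => Monoid.CoprodI.of p.2).prod := by
    rw [List.map_append, List.prod_append, hx, hy]
  rw [this]
  exact le_trans (D_prod_le δ h1 hmul _) (le_of_eq (sval_append δ _ _))

lemma D_inv (h1 : δ 1 = ⊥) (hinv : ∀ g : G, δ g⁻¹ = δ g)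
    (hmul : ∀ g h : G, δ (g * h) ≤ δ g ⊔ δ h)
    (x : Monoid.CoprodI (BF G K)) : D δ x⁻¹ = D δ x := by
  have key : ∀ z : Monoid.CoprodI (BF G K), D δ z⁻¹ ≤ D δ z := by
    intro z
    have hz : ((Word.equiv z).toList.map fun p => Monoid.CoprodI.of p.2).prod = z := by
      rw [prod_toList]; exact Word.equiv.symm_apply_apply z
    set l := (Word.equiv z).toList with hl
    have hmap : List.map (fun x => x⁻¹) (List.map (fun p => Monoid.CoprodI.of p.2) l)
        = List.map (fun p => Monoid.CoprodI.of p.2)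
            (List.map (fun p => (⟨p.1, p.2⁻¹⟩ : Σ b, BF G K b)) l) := by
      rw [List.map_map, List.map_map]
      apply List.map_congr_left
      intro p _
      simp [Function.comp]
    have : z⁻¹ = (List.map (fun p => Monoid.CoprodI.of p.2)
        ((l.map fun p => (⟨p.1, p.2⁻¹⟩ : Σ b, BF G K b)).reverse)).prod := by
      rw [← hz, List.prod_inv_reverse, hmap, List.map_reverse]
    rw [this]
    refine le_trans (D_prod_le δ h1 hmul _) ?_
    rw [sval_reverse]
    have : sval δ (l.map fun p => (⟨p.1, p.2⁻¹⟩ : Σ b, BF G K b)) = sval δ l := by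
      induction l with
      | nil => rfl
      | cons p t ih => rw [List.map_cons, sval_cons, sval_cons, ih, lval_inv δ hinv]
    rw [this, hl]
    exact le_rfl
  exact le_antisymm (key x) (by simpa using key x⁻¹)

lemma D_of (h1 : δ 1 = ⊥) {b : Bool} (m : BF G K b) :
    D δ (Monoid.CoprodI.of m) = lval δ b m := by
  rcases eq_or_ne m 1 with rfl | hm
  · rw [map_one, D_one, lval_one δ h1]
  · have hfst : Word.fstIdx (Word.empty : Word (BF G K)) ≠ some b := by
      simp [Word.fstIdx, Word.empty]
    have : Word.equiv (Monoid.CoprodI.of m) = Word.cons m Word.empty hfst hm := by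
      rw [Word.equiv.apply_eq_iff_eq_symm_apply]
      show Monoid.CoprodI.of m = Word.prod _
      rw [Word.prod_cons, Word.prod_empty, mul_one]
    rw [D, this]
    show lval δ b m ⊔ ⊥ = lval δ b m
    rw [sup_bot_eq]


variable (G K) in
/-- The canonical map `G ∗ K →* CoprodI (BF G K)`. -/
noncomputable def toC : Monoid.Coprod G K →* Monoid.CoprodI (BF G K) :=
  Monoid.Coprod.lift
    ((Monoid.CoprodI.of (M := BF G K) (i := true)).comp (MulEquiv.ulift.symm.toMonoidHom))
    ((Monoid.CoprodI.of (M := BF G K) (i := false)).comp (MulEquiv.ulift.symm.toMonoidHom))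

variable (G K) in
/-- The canonical map `CoprodI (BF G K) →* G ∗ K`. -/
noncomputable def fromC : Monoid.CoprodI (BF G K) →* Monoid.Coprod G K :=
  Monoid.CoprodI.lift fun b => match b with
    | true => (Monoid.Coprod.inl : G →* Monoid.Coprod G K).comp MulEquiv.ulift.toMonoidHom
    | false => (Monoid.Coprod.inr : K →* Monoid.Coprod G K).comp MulEquiv.ulift.toMonoidHom

@[simp] lemma toC_inl (g : G) :
    toC G K (Monoid.Coprod.inl g) = Monoid.CoprodI.of (M := BF G K) (i := true) (ULift.up g) :=
  Monoid.Coprod.lift_apply_inl _ _ _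

@[simp] lemma toC_inr (k : K) :
    toC G K (Monoid.Coprod.inr k) = Monoid.CoprodI.of (M := BF G K) (i := false) (ULift.up k) :=
  Monoid.Coprod.lift_apply_inr _ _ _

@[simp] lemma fromC_of_true (m : BF G K true) :
    fromC G K (Monoid.CoprodI.of m) = Monoid.Coprod.inl (ULift.down m) :=
  Monoid.CoprodI.lift_of _ _

@[simp] lemma fromC_of_false (m : BF G K false) :
    fromC G K (Monoid.CoprodI.of m) = Monoid.Coprod.inr (ULift.down m) :=
  Monoid.CoprodI.lift_of _ _

lemma fromC_toC (x : Monoid.Coprod G K) : fromC G K (toC G K x) = x := by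
  have : (fromC G K).comp (toC G K) = MonoidHom.id _ := by
    apply Monoid.Coprod.hom_ext <;> ext g <;> simp
    · exact fromC_of_true _
    · exact fromC_of_false _
  exact DFunLike.congr_fun this x

/-- convert letters -/
def convL : G ⊕ K → Σ b, BF G K b
  | Sum.inl g => ⟨true, ULift.up g⟩
  | Sum.inr k => ⟨false, ULift.up k⟩

/-- convert letters back -/
def unconvL : (Σ b, BF G K b) → G ⊕ K
  | ⟨true, g⟩ => Sum.inl (ULift.down g)
  | ⟨false, k⟩ => Sum.inr (ULift.down k)

lemma toC_letterProd (s : G ⊕ K) :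
    toC G K (letterProd s) = Monoid.CoprodI.of (convL s).2 := by
  cases s <;> simp [letterProd, convL] <;> rfl

lemma letterProd_unconvL (p : Σ b, BF G K b) :
    letterProd (unconvL p) = fromC G K (Monoid.CoprodI.of p.2) := by
  rcases p with ⟨b, m⟩
  cases b <;> simp [letterProd, unconvL]

lemma wordVal_eq_sval (l : List (G ⊕ K)) : wordVal δ l = sval δ (l.map convL) := by
  induction l with
  | nil => rfl
  | cons s l ih =>
      show Sum.elim δ (fun _ => (⊥ : I₀)) s ⊔ wordVal δ l = _
      rw [ih, List.map_cons, sval_cons]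
      congr 1
      cases s <;> rfl

lemma wordVal_unconv (l : List (Σ b, BF G K b)) :
    wordVal δ (l.map unconvL) = sval δ l := by
  induction l with
  | nil => rfl
  | cons p l ih =>
      show Sum.elim δ (fun _ => (⊥ : I₀)) (unconvL p) ⊔ wordVal δ (l.map unconvL)
        = lval δ p.1 p.2 ⊔ sval δ l
      rw [ih]
      congr 1
      rcases p with ⟨b, m⟩
      cases b <;> rfl

lemma toC_list_prod (l : List (G ⊕ K)) :
    toC G K (l.map letterProd).prod
      = ((l.map convL).map fun p => Monoid.CoprodI.of p.2).prod := by
  rw [map_list_prod, List.map_map, List.map_map]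
  congr 1
  apply List.map_congr_left
  intro s _
  exact toC_letterProd s


lemma lift_injective {H : Type*} [Group H] (f : H →* G) (hf : Function.Injective f) :
    Function.Injective (Monoid.Coprod.lift
      ((Monoid.Coprod.inl : G →* Monoid.Coprod G K).comp f)
      (Monoid.Coprod.inr : K →* Monoid.Coprod G K)) := by
  set φ := Monoid.Coprod.lift
      ((Monoid.Coprod.inl : G →* Monoid.Coprod G K).comp f)
      (Monoid.Coprod.inr : K →* Monoid.Coprod G K) with hφ
  rw [injective_iff_map_eq_one]
  intro a ha
  set w := Word.equiv (toC H K a) with hwdef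
  have hw : w.prod = toC H K a := Word.equiv.symm_apply_apply _
  let fmap : ∀ bb, BF H K bb → BF G K bb := fun bb => match bb with
    | true => fun h => ULift.up (f h.down)
    | false => fun k => ULift.up k.down
  let ξ : Monoid.CoprodI (BF H K) →* Monoid.CoprodI (BF G K) :=
    (toC G K).comp (φ.comp (fromC H K))
  have hξ : ∀ (bb) (m : BF H K bb), ξ (Monoid.CoprodI.of m) = Monoid.CoprodI.of (fmap bb m) := by
    intro bb m
    cases bb <;>
      simp [ξ, hφ, fmap, Monoid.Coprod.lift_apply_inl, Monoid.Coprod.lift_apply_inr]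
  have hne : ∀ p ∈ w.toList.map (fun p => (⟨p.1, fmap p.1 p.2⟩ : Σ b, BF G K b)), p.2 ≠ 1 := by
    intro p hp
    obtain ⟨q, hq, rfl⟩ := List.mem_map.mp hp
    have hq1 := w.ne_one q hq
    rcases q with ⟨bb, m⟩
    cases bb with
    | false =>
        intro hc
        have hd := congrArg ULift.down (show fmap false m = 1 from hc)
        exact hq1 (ULift.ext m 1 hd)
    | true =>
        intro hc
        have hd := congrArg ULift.down (show fmap true m = 1 from hc)
        have h2 : ULift.down m = 1 := hf (by rw [map_one]; exact hd)
        exact hq1 (ULift.ext m 1 h2)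
  have hchain : (w.toList.map (fun p => (⟨p.1, fmap p.1 p.2⟩ : Σ b, BF G K b))).IsChain
      fun l l' => l.1 ≠ l'.1 := by
    rw [List.isChain_map]
    exact w.chain_ne
  let w' : Word (BF G K) := ⟨w.toList.map (fun p => ⟨p.1, fmap p.1 p.2⟩), hne, hchain⟩
  have hprod : w'.prod = ξ w.prod := by
    show (List.map (fun p => Monoid.CoprodI.of p.2)
        (w.toList.map fun p => (⟨p.1, fmap p.1 p.2⟩ : Σ b, BF G K b))).prod
      = ξ (List.map (fun p => Monoid.CoprodI.of p.2) w.toList).prod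
    rw [map_list_prod, List.map_map, List.map_map]
    congr 1
    apply List.map_congr_left
    intro p _
    exact (hξ p.1 p.2).symm
  have h1' : w'.prod = 1 := by
    rw [hprod, hw]
    show toC G K (φ (fromC H K (toC H K a))) = 1
    rw [fromC_toC, ha, map_one]
  have hempty : w' = Word.empty := by
    have h2 := equiv_prod w'
    rw [h1', equiv_one] at h2
    exact h2.symm
  have hnil : w.toList = [] := by
    have : w'.toList = [] := by rw [hempty]; rfl
    exact List.map_eq_nil_iff.mp this
  have hwe : w = Word.empty := Word.ext hnil
  have : toC H K a = 1 := by rw [← hw, hwe, Word.prod_empty]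
  have := congrArg (fromC H K) this
  rwa [fromC_toC, map_one] at this

end Stmt11Aux


open Stmt11Aux

/-- Given a valuation `δ : G → I₀` and any group `K`, the map
`δ ∗ 0 : G ∗ K → I₀`, sending `x` with reduced expression `u₀v₁u₁⋯v_nu_n` to
`δ(u₀) ∨ ⋯ ∨ δ(u_n)` (equivalently, the minimum over all expressions of `x` as a product of
letters of the join of the letter values), is a valuation on `G ∗ K` extending `δ`, with
`(δ ∗ 0)(K) = 0`, whose level subgroup `(G ∗ K)_{δ∗0}(b)` equals the subgroup generated by
`G_δ(b)` and `K`, which is their free product `G_δ(b) ∗ K`. -/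
theorem stmt11 {G K : Type*} [Group G] [Group K] {I₀ : Type*} [SemilatticeSup I₀]
    [OrderBot I₀] (δ : G → I₀) (h1 : δ 1 = ⊥) (hinv : ∀ g : G, δ g⁻¹ = δ g)
    (hmul : ∀ g h : G, δ (g * h) ≤ δ g ⊔ δ h) :
    ∃ δ₁ : Monoid.Coprod G K → I₀,
      -- δ₁ is a valuation
      (δ₁ 1 = ⊥) ∧ (∀ x, δ₁ x⁻¹ = δ₁ x) ∧ (∀ x y, δ₁ (x * y) ≤ δ₁ x ⊔ δ₁ y) ∧
      -- δ₁ extends δ and vanishes on K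
      (∀ g : G, δ₁ (Monoid.Coprod.inl g) = δ g) ∧
      (∀ k : K, δ₁ (Monoid.Coprod.inr k) = ⊥) ∧
      -- δ₁ x is the minimum over all expressions of x as a product of letters of the
      -- join of the letter values (this minimum being attained at the reduced expression)
      (∀ (x : Monoid.Coprod G K) (l : List (G ⊕ K)), (l.map letterProd).prod = x →
        δ₁ x ≤ wordVal δ l) ∧
      (∀ x : Monoid.Coprod G K, ∃ l : List (G ⊕ K),
        (l.map letterProd).prod = x ∧ wordVal δ l = δ₁ x) ∧
      -- the level subgroups are the subgroups generated by G_δ(b) and K …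
      (∀ b : I₀, {x : Monoid.Coprod G K | δ₁ x ≤ b} =
        (Subgroup.closure
          ((fun g : G => Monoid.Coprod.inl g) '' {g : G | δ g ≤ b} ∪
            Set.range (fun k : K => Monoid.Coprod.inr k)) : Set (Monoid.Coprod G K))) ∧
      -- … and these are canonically the free product G_δ(b) ∗ K
      (∀ b : I₀, Function.Injective
        (Monoid.Coprod.lift
          ((Monoid.Coprod.inl : G →* Monoid.Coprod G K).comp
            (levelSubgroup δ h1 hinv hmul b).subtype)
          (Monoid.Coprod.inr : K →* Monoid.Coprod G K))) := by
  set δ₁ : Monoid.Coprod G K → I₀ := fun x => D δ (toC G K x) with hδ₁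
  have p1 : δ₁ 1 = ⊥ := by rw [hδ₁]; simp only [map_one]; exact D_one δ
  have p2 : ∀ x, δ₁ x⁻¹ = δ₁ x := by
    intro x
    show D δ (toC G K x⁻¹) = D δ (toC G K x)
    rw [map_inv]
    exact D_inv δ h1 hinv hmul _
  have p3 : ∀ x y, δ₁ (x * y) ≤ δ₁ x ⊔ δ₁ y := by
    intro x y
    show D δ (toC G K (x * y)) ≤ _
    rw [map_mul]
    exact D_mul_le δ h1 hmul _ _
  have p4 : ∀ g : G, δ₁ (Monoid.Coprod.inl g) = δ g := by
    intro g
    show D δ (toC G K (Monoid.Coprod.inl g)) = δ g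
    rw [toC_inl]
    exact D_of δ h1 (b := true) (ULift.up g)
  have p5 : ∀ k : K, δ₁ (Monoid.Coprod.inr k) = ⊥ := by
    intro k
    show D δ (toC G K (Monoid.Coprod.inr k)) = ⊥
    rw [toC_inr]
    exact D_of δ h1 (b := false) (ULift.up k)
  have p6 : ∀ (x : Monoid.Coprod G K) (l : List (G ⊕ K)), (l.map letterProd).prod = x →
      δ₁ x ≤ wordVal δ l := by
    intro x l hl
    show D δ (toC G K x) ≤ wordVal δ l
    rw [← hl, toC_list_prod, wordVal_eq_sval δ l]
    exact D_prod_le δ h1 hmul _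
  have p7 : ∀ x : Monoid.Coprod G K, ∃ l : List (G ⊕ K),
      (l.map letterProd).prod = x ∧ wordVal δ l = δ₁ x := by
    intro x
    refine ⟨(Word.equiv (toC G K x)).toList.map unconvL, ?_, ?_⟩
    · have e1 : ((Word.equiv (toC G K x)).toList.map unconvL).map letterProd
          = List.map (fromC G K)
              ((Word.equiv (toC G K x)).toList.map fun p => Monoid.CoprodI.of p.2) := by
        rw [List.map_map, List.map_map]
        apply List.map_congr_left
        intro p _
        exact letterProd_unconvL p
      rw [e1, ← map_list_prod, prod_toList,
        show Word.prod (Word.equiv (toC G K x)) = toC G K x from Word.equiv.symm_apply_apply _,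
        fromC_toC]
    · rw [wordVal_unconv]
      rfl
  have p8 : ∀ b : I₀, {x : Monoid.Coprod G K | δ₁ x ≤ b} =
      (Subgroup.closure
        ((fun g : G => Monoid.Coprod.inl g) '' {g : G | δ g ≤ b} ∪
          Set.range (fun k : K => Monoid.Coprod.inr k)) : Set (Monoid.Coprod G K)) := by
    intro b
    set S : Set (Monoid.Coprod G K) :=
      (fun g : G => Monoid.Coprod.inl g) '' {g : G | δ g ≤ b} ∪
        Set.range (fun k : K => Monoid.Coprod.inr k) with hS
    ext x
    simp only [Set.mem_setOf_eq, SetLike.mem_coe]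
    constructor
    · intro hx
      obtain ⟨l, hl, hval⟩ := p7 x
      rw [← hl]
      have hwv : wordVal δ l ≤ b := le_trans (le_of_eq hval) hx
      clear hl hval
      induction l with
      | nil => exact Subgroup.one_mem _
      | cons s l ih =>
          rw [List.map_cons, List.prod_cons]
          have hhead : Sum.elim δ (fun _ => (⊥ : I₀)) s ⊔ wordVal δ l = wordVal δ (s :: l) := rfl
          rw [← hhead] at hwv
          refine Subgroup.mul_mem _ (Subgroup.subset_closure ?_) (ih (le_trans le_sup_right hwv))
          cases s with
          | inl g =>
              exact Or.inl ⟨g, le_trans le_sup_left hwv, rfl⟩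
          | inr k => exact Or.inr ⟨k, rfl⟩
    · intro hx
      let T : Subgroup (Monoid.Coprod G K) :=
        { carrier := {x : Monoid.Coprod G K | δ₁ x ≤ b}
          one_mem' := by rw [Set.mem_setOf_eq, p1]; exact bot_le
          mul_mem' := fun hx hy => le_trans (p3 _ _) (sup_le hx hy)
          inv_mem' := fun hx => by rw [Set.mem_setOf_eq, p2]; exact hx }
      have hle : Subgroup.closure S ≤ T := by
        rw [Subgroup.closure_le]
        rintro y (⟨g, hg, rfl⟩ | ⟨k, rfl⟩)
        · show δ₁ (Monoid.Coprod.inl g) ≤ b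
          rw [p4]; exact hg
        · show δ₁ (Monoid.Coprod.inr k) ≤ b
          rw [p5]; exact bot_le
      exact hle hx
  have p9 : ∀ b : I₀, Function.Injective
      (Monoid.Coprod.lift
        ((Monoid.Coprod.inl : G →* Monoid.Coprod G K).comp
          (levelSubgroup δ h1 hinv hmul b).subtype)
        (Monoid.Coprod.inr : K →* Monoid.Coprod G K)) := fun b =>
    lift_injective _ (levelSubgroup δ h1 hinv hmul b).subtype_injective
  exact ⟨δ₁, p1, p2, p3, p4, p5, p6, p7, p8, p9⟩
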